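/- The graph G(Φ^α) = {(t, Φ^α(t)) : t ∈ I} ⊆ I × K_c(ℝ) of the set-valued fractal function is the attractor of the countable iterated function system {G_i : i ∈ ℕ}: G(Φ^α) = closure(⋃_{i∈ℕ} G_i(G(Φ^α))). -/

import Mathlib

open Set Metric Pointwise TopologicalSpace Filter

lemma smul_set_sub_aux (α : ℝ) (s t : Set ℝ) : α • (s - t) = α • s - α • t := by
  ext x
  simp only [Set.mem_smul_set, Set.mem_sub]
  constructor
  · rintro ⟨y, ⟨u, hu, v, hv, rfl⟩, rfl⟩
    exact ⟨α • u, ⟨u, hu, rfl⟩, α • v, ⟨v, hv, rfl⟩, (smul_sub α u v).symm⟩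
  · rintro ⟨y, ⟨u, hu, rfl⟩, z, ⟨v, hv, rfl⟩, rfl⟩
    exact ⟨u - v, ⟨u, hu, v, hv, rfl⟩, smul_sub α u v⟩

/-- The graph `G(Φ^α) = {(t, Φ^α(t)) : t ∈ I}` of the set-valued fractal function is the
attractor of the countable IFS `{G_i}` where
`G_i(t,S) = (ζ_i(t), αS + Φ(ζ_i(t)) − αB(t))`:  it satisfies
`G(Φ^α) = closure (⋃ i, G_i(G(Φ^α)))`.  The graph is viewed inside `ℝ × K(ℝ)` (with the
values of all maps convex, i.e. in `K_c(ℝ)`); `p n` is the partition point `t_{n+1}`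
(`p 0 = a = t₁`, `T = t_∞`) and `ζ i : I → [p i, p (i+1)]` are contraction
homeomorphisms with constants `c i`, `max{|α|, c i} < 1`. -/
theorem stmt_13
    (a T : ℝ) (haT : a < T)
    (p : ℕ → ℝ) (hp : StrictMono p) (hpa : p 0 = a)
    (hpT : Tendsto p atTop (nhds T))
    (ζ : ℕ → ℝ → ℝ) (c : ℕ → ℝ)
    (hζlip : ∀ i, ∀ x ∈ Icc a T, ∀ y ∈ Icc a T, |ζ i x - ζ i y| ≤ c i * |x - y|)
    (hζcont : ∀ i, ContinuousOn (ζ i) (Icc a T))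
    (hζinj : ∀ i, InjOn (ζ i) (Icc a T))
    (hζim : ∀ i, ζ i '' Icc a T = Icc (p i) (p (i + 1)))
    (α : ℝ) (hmax : ∀ i, max |α| (c i) < 1)
    (Φ B Φα : ℝ → NonemptyCompacts ℝ)
    (hΦ : ContinuousOn Φ (Icc a T)) (hB : ContinuousOn B (Icc a T))
    (hΦα : ContinuousOn Φα (Icc a T))
    (hΦconv : ∀ t ∈ Icc a T, Convex ℝ (Φ t : Set ℝ))
    (hBconv : ∀ t ∈ Icc a T, Convex ℝ (B t : Set ℝ))
    (hΦαconv : ∀ t ∈ Icc a T, Convex ℝ (Φα t : Set ℝ))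
    (hΦαeq : ∀ i, ∀ t ∈ Icc a T,
      (Φα (ζ i t) : Set ℝ) = (Φ (ζ i t) : Set ℝ) + α • ((Φα t : Set ℝ) - (B t : Set ℝ)))
    (G : ℕ → ℝ × NonemptyCompacts ℝ → ℝ × NonemptyCompacts ℝ)
    (hG1 : ∀ i x, (G i x).1 = ζ i x.1)
    (hG2 : ∀ i x, ((G i x).2 : Set ℝ) = α • (x.2 : Set ℝ) + (Φ (ζ i x.1) : Set ℝ)
        - α • (B x.1 : Set ℝ)) :
    (fun t => (t, Φα t)) '' Icc a T =
      closure (⋃ i : ℕ, G i '' ((fun t => (t, Φα t)) '' Icc a T)) := by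
  set g : ℝ → ℝ × NonemptyCompacts ℝ := fun t => (t, Φα t) with hg
  -- p n ≤ T and p n < T
  have hpleT : ∀ n, p n ≤ T := fun n => hp.monotone.ge_of_tendsto hpT n
  have hpltT : ∀ n, p n < T := fun n => lt_of_lt_of_le (hp n.lt_succ_self) (hpleT _)
  -- Step 1: G i maps graph points to graph points
  have key : ∀ i, ∀ t ∈ Icc a T, G i (g t) = g (ζ i t) := by
    intro i t ht
    have h1 : (G i (g t)).1 = ζ i t := hG1 i (g t)
    have h2 : ((G i (g t)).2 : Set ℝ) = (Φα (ζ i t) : Set ℝ) := by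
      rw [hG2 i (g t), hΦαeq i t ht, smul_set_sub_aux]
      have : α • (Φα t : Set ℝ) + (Φ (ζ i t) : Set ℝ) - α • (B t : Set ℝ)
          = (Φ (ζ i t) : Set ℝ) + α • (Φα t : Set ℝ) - α • (B t : Set ℝ) := by
        rw [add_comm]
      rw [this, add_sub_assoc]
    exact Prod.ext h1 (NonemptyCompacts.ext h2)
  -- Step 2: image of graph under G i
  have him : ∀ i, G i '' (g '' Icc a T) = g '' Icc (p i) (p (i + 1)) := by
    intro i
    rw [← hζim i, Set.image_image, Set.image_image]
    exact Set.image_congr fun t ht => key i t ht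
  -- Step 3: union of the subintervals is Ico a T
  have hunion : (⋃ i : ℕ, Icc (p i) (p (i + 1))) = Ico a T := by
    apply Set.Subset.antisymm
    · rintro x ⟨s, ⟨i, rfl⟩, hx1, hx2⟩
      refine ⟨le_trans ?_ hx1, lt_of_le_of_lt hx2 (hpltT _)⟩
      rw [← hpa]; exact hp.monotone (Nat.zero_le i)
    · rintro x ⟨hx1, hx2⟩
      have hex : ∃ n, x < p n := (hpT.eventually (eventually_gt_nhds hx2)).exists
      have hxN : x < p (Nat.find hex) := Nat.find_spec hex
      have hN0 : Nat.find hex ≠ 0 := by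
        intro h
        rw [h, hpa] at hxN
        exact absurd hx1 (not_le.mpr hxN)
      obtain ⟨M, hM1⟩ := Nat.exists_eq_succ_of_ne_zero hN0
      have hM : ¬ x < p M := Nat.find_min hex (by omega)
      rw [hM1] at hxN
      exact Set.mem_iUnion.mpr ⟨M, not_lt.mp hM, hxN.le⟩
  -- continuity of g
  have hgc : ContinuousOn g (Icc a T) := (continuousOn_id).prodMk hΦα
  -- graph is compact, hence closed
  have hΓc : IsCompact (g '' Icc a T) := isCompact_Icc.image_of_continuousOn hgc
  -- rewrite the union
  have hU : (⋃ i : ℕ, G i '' (g '' Icc a T)) = g '' Ico a T := by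
    simp_rw [him]
    rw [← Set.image_iUnion, hunion]
  rw [hU]
  apply Set.Subset.antisymm
  · rintro _ ⟨t, ht, rfl⟩
    rcases lt_or_eq_of_le ht.2 with h | h
    · exact subset_closure ⟨t, ⟨ht.1, h⟩, rfl⟩
    · -- t = T : limit point
      subst h
      have hcw : ContinuousWithinAt g (Ico a t) t :=
        (hgc.continuousWithinAt ht).mono Set.Ico_subset_Icc_self
      have htc : t ∈ closure (Ico a t) := by
        rw [closure_Ico haT.ne]
        exact ht
      exact hcw.mem_closure_image htc
  · have : g '' Ico a T ⊆ g '' Icc a T :=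
      Set.image_mono Set.Ico_subset_Icc_self
    exact closure_minimal this hΓc.isClosed
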